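/- Let C be a binary linear code of length 2^m with monomial generating set M_C (a set of monomials whose evaluations form a basis of C). Then the minimum Hamming distance of C equals 2^{m − r} where r = max{wt(v) : x^v ∈ M_C}. -/
import Mathlib

/-- The monomial `x^v = ∏ i, x_i ^ v_i` as a Boolean function. -/
def mono {m : ℕ} (v : Fin m → ZMod 2) : (Fin m → ZMod 2) → ZMod 2 :=
  fun x => ∏ i, (x i) ^ (v i).val

/-- The Hamming weight of `v ∈ F₂^m`. -/
def wt {m : ℕ} (v : Fin m → ZMod 2) : ℕ :=
  (Finset.univ.filter fun i => v i = 1).card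

/-- The Hamming weight of a codeword (viewed as a function on `F₂^m`). -/
def fwt {m : ℕ} (c : (Fin m → ZMod 2) → ZMod 2) : ℕ :=
  (Finset.univ.filter fun x => c x ≠ 0).card

lemma zmod2_cases (a : ZMod 2) : a = 0 ∨ a = 1 := by revert a; decide

lemma zmod2_sum_pow (e : ZMod 2) :
    (∑ b : ZMod 2, b ^ e.val) = if e = 1 then 1 else 0 := by revert e; decide

lemma eq_of_supp_subset {m : ℕ} {u v : Fin m → ZMod 2}
    (h : ∀ i, u i = 1 → v i = 1) (hw : wt v ≤ wt u) : v = u := by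
  have hsub : (Finset.univ.filter fun i => u i = 1) ⊆
      (Finset.univ.filter fun i => v i = 1) := by
    intro i hi
    simp only [Finset.mem_filter, Finset.mem_univ, true_and] at hi ⊢
    exact h i hi
  have heq := Finset.eq_of_subset_of_card_le hsub hw
  funext i
  rcases zmod2_cases (u i) with h0 | h1
  · rcases zmod2_cases (v i) with g0 | g1
    · rw [h0, g0]
    · have : i ∈ Finset.univ.filter fun i => v i = 1 := by simp [g1]
      rw [← heq] at this
      simp only [Finset.mem_filter, Finset.mem_univ, true_and] at this
      rw [this] at h0; exact absurd h0 (by decide)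
  · rw [h1, h i h1]

/-- Cardinality of the set of vectors prescribed on the support of `u`. -/
lemma card_prescribed {m : ℕ} (u : Fin m → ZMod 2) (b : ZMod 2) :
    (Finset.univ.filter fun x : Fin m → ZMod 2 => ∀ i, u i = 1 → x i = b).card
      = 2 ^ (m - wt u) := by
  have hset : (Finset.univ.filter fun x : Fin m → ZMod 2 => ∀ i, u i = 1 → x i = b)
      = Fintype.piFinset (fun i => if u i = 1 then {b} else Finset.univ) := by
    ext x
    simp only [Finset.mem_filter, Finset.mem_univ, true_and, Fintype.mem_piFinset]
    constructor
    · intro h i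
      by_cases hi : u i = 1
      · simp [hi, h i hi]
      · simp [hi]
    · intro h i hi
      have := h i
      simp [hi] at this
      exact this
  rw [hset, Fintype.card_piFinset]
  have : ∀ i : Fin m, ((if u i = 1 then ({b} : Finset (ZMod 2)) else Finset.univ)).card
      = if u i = 1 then 1 else 2 := by
    intro i; by_cases hi : u i = 1 <;> simp [hi]
  rw [Finset.prod_congr rfl (fun i _ => this i)]
  rw [← Finset.prod_filter_mul_prod_filter_not Finset.univ (fun i => u i = 1)]
  have h1 : (∏ x ∈ Finset.filter (fun i => u i = 1) Finset.univ,
      (if u x = 1 then 1 else 2)) = 1 := by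
    apply Finset.prod_eq_one
    intro i hi
    simp only [Finset.mem_filter] at hi
    simp [hi.2]
  have h2 : (∏ x ∈ Finset.filter (fun i => ¬ u i = 1) Finset.univ,
      (if u x = 1 then 1 else 2)) = 2 ^ (m - wt u) := by
    rw [Finset.prod_congr rfl (fun i hi => by
      simp only [Finset.mem_filter] at hi
      simp [hi.2] : ∀ i ∈ Finset.filter (fun i => ¬ u i = 1) Finset.univ,
        (if u i = 1 then 1 else 2) = 2)]
    rw [Finset.prod_const]
    congr 1
    have := Finset.card_filter_add_card_filter_not (s := (Finset.univ : Finset (Fin m)))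
      (fun i => u i = 1)
    simp only [Finset.card_univ, Fintype.card_fin] at this
    unfold wt
    omega
  rw [h1, h2, one_mul]

lemma mono_ne_zero_iff {m : ℕ} (v x : Fin m → ZMod 2) :
    mono v x ≠ 0 ↔ ∀ i, v i = 1 → x i = 1 := by
  unfold mono
  rw [Finset.prod_ne_zero_iff]
  constructor
  · intro h i hi
    have := h i (Finset.mem_univ i)
    rw [hi] at this
    simp only [show (1 : ZMod 2).val = 1 from rfl, pow_one] at this
    rcases zmod2_cases (x i) with h0 | h1
    · exact absurd h0 this
    · exact h1
  · intro h i _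
    rcases zmod2_cases (v i) with h0 | h1
    · rw [h0]; simp
    · rw [h1, h i h1]; simp

lemma fwt_mono {m : ℕ} (v : Fin m → ZMod 2) : fwt (mono v) = 2 ^ (m - wt v) := by
  unfold fwt
  rw [← card_prescribed v 1]
  congr 1
  apply Finset.filter_congr
  intro x _
  simpa using mono_ne_zero_iff v x

/-- Sum of a monomial over a subcube where coordinates off the support of `u`
are fixed to `z`. -/
lemma sum_cube {m : ℕ} (u z v : Fin m → ZMod 2) :
    (∑ x ∈ Fintype.piFinset
        (fun i => if u i = 1 then (Finset.univ : Finset (ZMod 2)) else {z i}),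
      mono v x)
    = if ∀ i, u i = 1 → v i = 1 then
        ∏ i ∈ Finset.univ.filter (fun i => ¬ u i = 1), z i ^ (v i).val else 0 := by
  have key := Finset.prod_univ_sum
    (fun i => if u i = 1 then (Finset.univ : Finset (ZMod 2)) else {z i})
    (fun i b => b ^ (v i).val)
  rw [show (∑ x ∈ Fintype.piFinset
        (fun i => if u i = 1 then (Finset.univ : Finset (ZMod 2)) else {z i}),
      mono v x) = ∑ x ∈ Fintype.piFinset
        (fun i => if u i = 1 then (Finset.univ : Finset (ZMod 2)) else {z i}),
      ∏ i, (x i) ^ (v i).val from rfl, ← key]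
  have hfac : ∀ i : Fin m,
      (∑ b ∈ (if u i = 1 then (Finset.univ : Finset (ZMod 2)) else {z i}), b ^ (v i).val)
      = if u i = 1 then (if v i = 1 then 1 else 0) else z i ^ (v i).val := by
    intro i
    by_cases hi : u i = 1
    · simp only [hi, if_true]
      exact zmod2_sum_pow (v i)
    · simp [hi]
  rw [Finset.prod_congr rfl (fun i _ => hfac i)]
  by_cases hall : ∀ i, u i = 1 → v i = 1
  · rw [if_pos hall]
    rw [← Finset.prod_filter_mul_prod_filter_not Finset.univ (fun i => u i = 1)]
    have h1 : (∏ i ∈ Finset.univ.filter (fun i => u i = 1),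
        (if u i = 1 then (if v i = 1 then 1 else 0) else z i ^ (v i).val)) = 1 := by
      apply Finset.prod_eq_one
      intro i hi
      simp only [Finset.mem_filter] at hi
      simp [hi.2, hall i hi.2]
    rw [h1, one_mul]
    apply Finset.prod_congr rfl
    intro i hi
    simp only [Finset.mem_filter] at hi
    simp [hi.2]
  · rw [if_neg hall]
    push_neg at hall
    obtain ⟨i, hi, hvi⟩ := hall
    apply Finset.prod_eq_zero (Finset.mem_univ i)
    simp [hi, hvi]

lemma lower_bound {m : ℕ} (S : Finset (Fin m → ZMod 2))
    (l : (Fin m → ZMod 2) →₀ ZMod 2) (hsupp : (l.support : Set (Fin m → ZMod 2)) ⊆ ↑S)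
    {c : (Fin m → ZMod 2) → ZMod 2}
    (hc : ∑ v ∈ l.support, l v • mono v = c) (hc0 : c ≠ 0) :
    2 ^ (m - S.sup wt) ≤ fwt c := by
  -- the support of l is nonempty
  have hne : l.support.Nonempty := by
    rcases Finset.eq_empty_or_nonempty l.support with h | h
    · exfalso; apply hc0; rw [← hc, h, Finset.sum_empty]
    · exact h
  -- choose u of maximal weight in the support
  obtain ⟨u, huS, humax⟩ := Finset.exists_max_image l.support wt hne
  have hlu : l u ≠ 0 := Finsupp.mem_support_iff.mp huS
  -- pointwise formula for c
  have hcx : ∀ x, c x = ∑ v ∈ l.support, l v * mono v x := by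
    intro x
    rw [← hc]
    simp [Finset.sum_apply]
  -- surjectivity of the projection onto the complement of supp u
  set Z : Finset (Fin m → ZMod 2) :=
    Finset.univ.filter fun z => ∀ i, u i = 1 → z i = 0 with hZ
  set W : Finset (Fin m → ZMod 2) := Finset.univ.filter fun x => c x ≠ 0 with hW
  have hsurj : Set.SurjOn (fun x i => if u i = 1 then (0 : ZMod 2) else x i)
      (W : Set (Fin m → ZMod 2)) (Z : Set (Fin m → ZMod 2)) := by
    intro z hz
    simp only [hZ, Finset.coe_filter, Set.mem_setOf_eq, Finset.mem_univ, true_and] at hz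
    -- sum of c over the cube through z equals l u ≠ 0
    have hsum : (∑ x ∈ Fintype.piFinset
        (fun i => if u i = 1 then (Finset.univ : Finset (ZMod 2)) else {z i}), c x)
        = l u := by
      rw [Finset.sum_congr rfl (fun x _ => hcx x), Finset.sum_comm]
      rw [Finset.sum_congr rfl (fun v _ => by rw [← Finset.mul_sum])]
      rw [Finset.sum_congr rfl (fun v _ => by rw [sum_cube u z v])]
      rw [Finset.sum_eq_single u]
      · rw [if_pos (fun i hi => hi)]
        · have : (∏ i ∈ Finset.univ.filter (fun i => ¬ u i = 1), z i ^ (u i).val) = 1 := by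
            apply Finset.prod_eq_one
            intro i hi
            simp only [Finset.mem_filter] at hi
            rcases zmod2_cases (u i) with h0 | h1
            · rw [h0]; rfl
            · exact absurd h1 hi.2
          rw [this, mul_one]
      · intro v hv hvu
        by_cases hall : ∀ i, u i = 1 → v i = 1
        · exfalso
          exact hvu (eq_of_supp_subset hall (humax v hv))
        · rw [if_neg hall, mul_zero]
      · intro h; exact absurd huS h
    have : (∑ x ∈ Fintype.piFinset
        (fun i => if u i = 1 then (Finset.univ : Finset (ZMod 2)) else {z i}), c x) ≠ 0 := by
      rw [hsum]; exact hlu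
    obtain ⟨x, hxmem, hxne⟩ := Finset.exists_ne_zero_of_sum_ne_zero this
    refine ⟨x, ?_, ?_⟩
    · simp only [hW, Finset.coe_filter, Set.mem_setOf_eq, Finset.mem_univ, true_and]
      exact hxne
    · funext i
      by_cases hi : u i = 1
      · simp [hi, hz i hi]
      · simp only [hi, if_false]
        have := (Fintype.mem_piFinset.mp hxmem) i
        simp only [hi, if_false, Finset.mem_singleton] at this
        exact this
  have hcard := Finset.card_le_card_of_surjOn _ hsurj
  have hZcard : Z.card = 2 ^ (m - wt u) := card_prescribed u 0
  have hwu : wt u ≤ S.sup wt := Finset.le_sup (hsupp huS)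
  calc 2 ^ (m - S.sup wt) ≤ 2 ^ (m - wt u) := by
        apply Nat.pow_le_pow_right (by norm_num)
        omega
    _ = Z.card := hZcard.symm
    _ ≤ W.card := hcard
    _ = fwt c := rfl

theorem monomial_code_min_distance {m : ℕ} (S : Finset (Fin m → ZMod 2))
    (hS : S.Nonempty) :
    IsLeast {w | ∃ c ∈ Submodule.span (ZMod 2) {f | ∃ v ∈ S, f = mono v},
        c ≠ 0 ∧ w = fwt c}
      (2 ^ (m - S.sup wt)) := by
  have hsetEq : {f | ∃ v ∈ S, f = mono v} = mono '' (S : Set (Fin m → ZMod 2)) := by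
    ext f
    simp [eq_comm]
  constructor
  · -- membership: take a monomial of maximal weight
    obtain ⟨v, hvS, hveq⟩ := Finset.exists_mem_eq_sup S hS wt
    refine ⟨mono v, Submodule.subset_span ⟨v, hvS, rfl⟩, ?_, ?_⟩
    · intro h
      have h1 : mono v (fun _ => 1) = 0 := by rw [h]; rfl
      unfold mono at h1
      simp at h1
    · rw [fwt_mono, hveq]
  · -- lower bound
    rintro w ⟨c, hcspan, hc0, rfl⟩
    rw [hsetEq] at hcspan
    obtain ⟨l, hlsupp, hl⟩ := (Finsupp.mem_span_image_iff_linearCombination (ZMod 2)).mp hcspan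
    have hlsum : ∑ v ∈ l.support, l v • mono v = c := by
      rw [← hl, Finsupp.linearCombination_apply, Finsupp.sum]
    exact lower_bound S l hlsupp hlsum hc0
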